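/- Let i be a positive integer with p² ∤ i, let u ≥ 0 be an integer, and set d = p^{2u}·i. Then for every integer n with 0 ≤ n < u, T_n(F_d) = Σ_{t=0}^{n} p^{n−t}·F_{p^{2u−2n+4t}·i}. -/

import Mathlib

/-- Action of the normalized Hecke operators `T₁₂(p^{2n})` on the Folsom–Ono
weight 1/2 mock modular forms `F_d`, for `d = p^{2u}·i` with `p² ∤ i` and
`0 ≤ n < u`. -/
theorem stmt_8 {p : ℕ} [Fact p.Prime] (hp : 5 ≤ p)
    {M : Type*} [AddCommGroup M] [Module ℤ M]
    (F : ℕ → M) (T : M →ₗ[ℤ] M)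
    (hT : ∀ d : ℕ, 0 < d →
      T (F d) = (p : ℤ) • (if p ^ 2 ∣ d then F (d / p ^ 2) else 0)
        + (legendreSym p 12 * legendreSym p (-(d : ℤ))) • F d + F (p ^ 2 * d))
    (Tn : ℕ → M →ₗ[ℤ] M)
    (hTn0 : Tn 0 = LinearMap.id) (hTn1 : Tn 1 = T)
    (hTnrec : ∀ n : ℕ, Tn (n + 2) = T ∘ₗ Tn (n + 1) - (p : ℤ) • Tn n)
    (i u : ℕ) (hi : 0 < i) (hip : ¬ p ^ 2 ∣ i)
    (d : ℕ) (hd : d = p ^ (2 * u) * i)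
    (n : ℕ) (hn : n < u) :
    Tn n (F d) =
      ∑ t ∈ Finset.range (n + 1),
        ((p : ℤ) ^ (n - t)) • F (p ^ (2 * (u - n) + 4 * t) * i) := by
  have hppos : 0 < p := (Fact.out : p.Prime).pos
  have zsum : ∀ (c : ℤ) (m : ℕ) (g : ℕ → M),
      c • (∑ t ∈ Finset.range m, g t) = ∑ t ∈ Finset.range m, c • g t := by
    intro c m g
    induction m with
    | zero => rw [Finset.sum_range_zero, Finset.sum_range_zero, zsmul_zero]
    | succ m ih => rw [Finset.sum_range_succ, Finset.sum_range_succ, zsmul_add, ih]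
  have key : ∀ e : ℕ, 2 ≤ e →
      T (F (p ^ e * i)) = (p : ℤ) • F (p ^ (e - 2) * i) + F (p ^ (e + 2) * i) := by
    intro e he
    have hpos : 0 < p ^ e * i := Nat.mul_pos (pow_pos hppos e) hi
    rw [hT _ hpos]
    have hdvd : p ^ 2 ∣ p ^ e * i := dvd_mul_of_dvd_left (pow_dvd_pow p he) _
    rw [if_pos hdvd]
    have hleg : legendreSym p (-((p ^ e * i : ℕ) : ℤ)) = 0 := by
      rw [legendreSym.eq_zero_iff]
      push_cast
      have : ((p : ZMod p)) = 0 := ZMod.natCast_self p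
      rw [show (p : ZMod p) ^ e = 0 from by
        rw [this]; exact zero_pow (by omega)] <;> ring
    rw [hleg, mul_zero, zero_smul, add_zero]
    congr 2
    · have : p ^ e * i = p ^ 2 * (p ^ (e - 2) * i) := by
        rw [← mul_assoc, ← pow_add]
        congr 2
        omega
      rw [this, Nat.mul_div_cancel_left _ (pow_pos hppos 2)]
    · rw [← mul_assoc, ← pow_add]
      congr 2
      omega
  subst hd
  induction n using Nat.twoStepInduction with
  | zero =>
    rw [hTn0]
    simp
  | one =>
    rw [hTn1, key (2 * u) (by omega)]
    rw [Finset.sum_range_succ, Finset.sum_range_one]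
    have h1 : 2 * (u - 1) + 4 * 0 = 2 * u - 2 := by omega
    have h2 : 2 * (u - 1) + 4 * 1 = 2 * u + 2 := by omega
    norm_num [h1, h2]
  | more n ih1 ih2 =>
    obtain ⟨s, rfl⟩ : ∃ s, u = n + 3 + s := ⟨u - (n + 3), by omega⟩
    rw [hTnrec]
    have hs : ∀ x, ((p : ℤ) • Tn n) x = (p : ℤ) • Tn n x := fun x => rfl
    simp only [LinearMap.sub_apply, LinearMap.coe_comp, Function.comp_apply,
      LinearMap.smul_apply, hs]
    rw [ih2 (by omega), ih1 (by omega), map_sum]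
    have hA : ∀ t ∈ Finset.range (n + 2),
        T (((p : ℤ) ^ (n + 1 - t)) • F (p ^ (2 * ((n + 3 + s) - (n + 1)) + 4 * t) * i))
          = ((p : ℤ) ^ (n + 2 - t)) • F (p ^ (2 * (s + 1) + 4 * t) * i)
            + ((p : ℤ) ^ (n + 1 - t)) • F (p ^ (2 * (s + 3) + 4 * t) * i) := by
      intro t ht
      rw [Finset.mem_range] at ht
      rw [show 2 * ((n + 3 + s) - (n + 1)) + 4 * t = 2 * (s + 2) + 4 * t by omega,
        map_zsmul, key _ (by omega),
        show 2 * (s + 2) + 4 * t - 2 = 2 * (s + 1) + 4 * t from by omega,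
        show 2 * (s + 2) + 4 * t + 2 = 2 * (s + 3) + 4 * t from by omega,
        zsmul_add, ← mul_zsmul,
        show (p : ℤ) ^ (n + 1 - t) * p = (p : ℤ) ^ (n + 2 - t) from by
          rw [← pow_succ]; congr 1; omega]
    rw [Finset.sum_congr rfl hA, Finset.sum_add_distrib]
    have hB : (p : ℤ) • ∑ t ∈ Finset.range (n + 1),
          ((p : ℤ) ^ (n - t)) • F (p ^ (2 * ((n + 3 + s) - n) + 4 * t) * i)
        = ∑ t ∈ Finset.range (n + 1),
          ((p : ℤ) ^ (n + 1 - t)) • F (p ^ (2 * (s + 3) + 4 * t) * i) := by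
      rw [zsum]
      refine Finset.sum_congr rfl fun t ht => ?_
      rw [Finset.mem_range] at ht
      rw [← mul_zsmul, show (p : ℤ) * (p : ℤ) ^ (n - t) = (p : ℤ) ^ (n + 1 - t) from by
          rw [← pow_succ']; congr 1; omega,
        show 2 * ((n + 3 + s) - n) + 4 * t = 2 * (s + 3) + 4 * t from by omega]
    rw [hB]
    rw [show (n + 3 + s) - (n + 2) = s + 1 from by omega]
    rw [Finset.sum_range_succ (n := n + 2), Finset.sum_range_succ
      (f := fun t => ((p : ℤ) ^ (n + 1 - t)) • F (p ^ (2 * (s + 3) + 4 * t) * i)) (n := n + 1)]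
    simp only [Nat.sub_self, pow_zero, one_smul]
    rw [show 2 * (s + 3) + 4 * (n + 1) = 2 * (s + 1) + 4 * (n + 2) from by omega]
    abel
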